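/- Fix s > 0 and γ ∈ ℝ with sin γ ≠ 0; let d = 2 cos γ and define φ_d(z) = (1/(2s sin γ)) · sinh(((π − γ)/s) z) / sinh((π/s) z). Then φ_d is meromorphic on ℂ, is analytic on ℂ \ (i s ℤ) (the apparent singularity at z = 0 is removable), and satisfies the functional equation φ_d(z + is) + φ_d(z − is) − d·φ_d(z) = 0 for all z ∉ i s ℤ. -/

import Mathlib

open Complex

private lemma sinh_zero_iff' (w : ℂ) :
    Complex.sinh w = 0 ↔ ∃ n : ℤ, w = n * Real.pi * I := by
  have key : Complex.sinh w = 0 ↔ Complex.sin (w * I) = 0 := by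
    rw [Complex.sin_mul_I, mul_eq_zero]
    simp [I_ne_zero]
  rw [key]
  constructor
  · intro h
    obtain ⟨k, hk⟩ := Complex.sin_eq_zero_iff.1 h
    refine ⟨-k, ?_⟩
    have h2 : w * I * I = k * Real.pi * I := by rw [hk]
    rw [mul_assoc, I_mul_I, mul_neg_one] at h2
    push_cast
    linear_combination -h2
  · rintro ⟨n, rfl⟩
    rw [Complex.sin_eq_zero_iff]
    exact ⟨-n, by push_cast; rw [mul_assoc, mul_assoc, I_mul_I]; ring⟩

private lemma dslope_dAt (c : ℂ) (z : ℂ) :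
    DifferentiableAt ℂ (dslope (fun w => Complex.sinh (c * w)) 0) z := by
  have hdiff : Differentiable ℂ (fun w : ℂ => Complex.sinh (c * w)) :=
    Complex.differentiable_sinh.comp (differentiable_id.const_mul c)
  rcases eq_or_ne z 0 with rfl | hz
  · obtain ⟨p, hp⟩ := hdiff.analyticAt 0
    exact hp.has_fpower_series_dslope_fslope.analyticAt.differentiableAt
  · have hev : (fun w => Complex.sinh (c * w) / w) =ᶠ[nhds z]
        dslope (fun w => Complex.sinh (c * w)) 0 := by
      filter_upwards [isOpen_compl_singleton.mem_nhds (by simpa using hz : z ∈ ({0}ᶜ : Set ℂ))]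
        with w hw
      rw [dslope_of_ne _ (by simpa using hw), slope_def_field]
      simp
    exact (((hdiff z).div differentiableAt_id hz)).congr_of_eventuallyEq hev.symm

private lemma dslope_eq (c : ℂ) (z : ℂ) (hz : z ≠ 0) :
    dslope (fun w => Complex.sinh (c * w)) 0 z = Complex.sinh (c * z) / z := by
  rw [dslope_of_ne _ hz, slope_def_field]; simp

private lemma dslope_at_zero (c : ℂ) :
    dslope (fun w => Complex.sinh (c * w)) 0 0 = c := by
  rw [dslope_same]
  have h : HasDerivAt (fun w => Complex.sinh (c * w)) (Complex.cosh (c * 0) * c) 0 := by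
    simpa using ((hasDerivAt_id (0:ℂ)).const_mul c).csinh
  simpa using h.deriv

/-- The explicit kernel `φ_d(z) = (1/(2s sin γ)) sinh(((π−γ)/s)z)/sinh((π/s)z)` (with
`d = 2 cos γ`, `sin γ ≠ 0`) is meromorphic on `ℂ`, analytic on `ℂ ∖ isℤ` (the singularity at
`0` being removable), and satisfies `φ_d(z+is) + φ_d(z−is) − d φ_d(z) = 0` off `isℤ`. -/
theorem stmt_14 (s γ : ℝ) (hs : 0 < s) (hγ : Real.sin γ ≠ 0)
    (φ : ℂ → ℂ)
    (hφ : ∀ z : ℂ, φ z = ((1 / (2 * s * Real.sin γ) : ℝ) : ℂ) *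
        (Complex.sinh ((((Real.pi - γ) / s : ℝ) : ℂ) * z) /
          Complex.sinh (((Real.pi / s : ℝ) : ℂ) * z))) :
    MeromorphicOn φ Set.univ ∧
    DifferentiableOn ℂ φ {z : ℂ | ∀ n : ℤ, z ≠ Complex.I * s * n} ∧
    (∃ Φ : ℂ → ℂ,
      DifferentiableOn ℂ Φ {z : ℂ | ∀ n : ℤ, n ≠ 0 → z ≠ Complex.I * s * n} ∧
      ∀ z : ℂ, (∀ n : ℤ, z ≠ Complex.I * s * n) → Φ z = φ z) ∧
    (∀ z : ℂ, (∀ n : ℤ, z ≠ Complex.I * s * n) →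
      φ (z + Complex.I * s) + φ (z - Complex.I * s) - ((2 * Real.cos γ : ℝ) : ℂ) * φ z = 0) := by
  have hs0 : (s : ℂ) ≠ 0 := by exact_mod_cast hs.ne'
  have hπc : (Real.pi : ℂ) ≠ 0 := by exact_mod_cast Real.pi_ne_zero
  set A : ℂ := (((Real.pi - γ) / s : ℝ) : ℂ) with hA
  set B : ℂ := ((Real.pi / s : ℝ) : ℂ) with hB
  set c : ℂ := ((1 / (2 * s * Real.sin γ) : ℝ) : ℂ) with hc
  have hBdef : B = (Real.pi : ℂ) / s := by rw [hB]; push_cast; ring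
  have hBne : B ≠ 0 := by rw [hBdef]; exact div_ne_zero hπc hs0
  have hdiffA : Differentiable ℂ (fun w : ℂ => Complex.sinh (A * w)) :=
    Complex.differentiable_sinh.comp (differentiable_id.const_mul A)
  have hdiffB : Differentiable ℂ (fun w : ℂ => Complex.sinh (B * w)) :=
    Complex.differentiable_sinh.comp (differentiable_id.const_mul B)
  -- sinh (B z) ≠ 0 off the lattice
  have hkey : ∀ z : ℂ, (∀ n : ℤ, z ≠ Complex.I * s * n) → Complex.sinh (B * z) ≠ 0 := by
    intro z hz h
    obtain ⟨n, hn⟩ := (sinh_zero_iff' _).1 h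
    apply hz n
    rw [hBdef] at hn
    have h2 : (Real.pi : ℂ) * z = (Real.pi : ℂ) * (Complex.I * s * n) := by
      field_simp at hn
      linear_combination (Real.pi : ℂ) * hn
    exact mul_left_cancel₀ hπc h2
  have hφ' : φ = fun z => c * (Complex.sinh (A * z) / Complex.sinh (B * z)) := funext hφ
  refine ⟨?_, ?_, ?_, ?_⟩
  · -- meromorphic
    rw [hφ']
    intro z _
    exact (MeromorphicAt.const c z).mul
      (((hdiffA.analyticAt z).meromorphicAt).div ((hdiffB.analyticAt z).meromorphicAt))
  · -- differentiable off lattice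
    intro z hz
    have hz' : ∀ n : ℤ, z ≠ Complex.I * s * n := hz
    rw [hφ']
    exact ((differentiableAt_const c).mul
      ((hdiffA z).div (hdiffB z) (hkey z hz'))).differentiableWithinAt
  · -- removable singularity extension
    refine ⟨fun z => c * (dslope (fun w => Complex.sinh (A * w)) 0 z /
        dslope (fun w => Complex.sinh (B * w)) 0 z), ?_, ?_⟩
    · intro z hz
      have hz' : ∀ n : ℤ, n ≠ 0 → z ≠ Complex.I * s * n := hz
      have hGne : dslope (fun w => Complex.sinh (B * w)) 0 z ≠ 0 := by
        rcases eq_or_ne z 0 with rfl | h0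
        · rw [dslope_at_zero]; exact hBne
        · rw [dslope_eq _ _ h0]
          refine div_ne_zero (hkey z ?_) h0
          intro n
          rcases eq_or_ne n 0 with rfl | hn
          · simpa using h0
          · exact hz' n hn
      exact ((differentiableAt_const c).mul
        ((dslope_dAt A z).div (dslope_dAt B z) hGne)).differentiableWithinAt
    · intro z hz
      have h0 : z ≠ 0 := by simpa using hz 0
      have hg := hkey z hz
      rw [hφ z]
      simp only [dslope_eq A z h0, dslope_eq B z h0]
      rw [div_div_div_cancel_right₀]
      exact h0
  · -- functional equation
    intro z hz
    have hGz : Complex.sinh (B * z) ≠ 0 := hkey z hz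
    have hAs : A * (Complex.I * s) = ((Real.pi : ℂ) - γ) * Complex.I := by
      rw [hA]; push_cast; field_simp
    have hBs : B * (Complex.I * s) = (Real.pi : ℂ) * Complex.I := by
      rw [hBdef]; field_simp
    have e1 : Complex.sinh (A * (z + Complex.I * s)) =
        Complex.sinh (A * z) * (-Complex.cos γ) +
          Complex.cosh (A * z) * (Complex.sin γ * Complex.I) := by
      rw [mul_add, hAs, Complex.sinh_add, Complex.sinh_mul_I, Complex.cosh_mul_I,
        Complex.sin_pi_sub, Complex.cos_pi_sub]
    have e2 : Complex.sinh (A * (z - Complex.I * s)) =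
        Complex.sinh (A * z) * (-Complex.cos γ) -
          Complex.cosh (A * z) * (Complex.sin γ * Complex.I) := by
      rw [mul_sub, hAs, Complex.sinh_sub, Complex.sinh_mul_I, Complex.cosh_mul_I,
        Complex.sin_pi_sub, Complex.cos_pi_sub]
    have e3 : Complex.sinh (B * (z + Complex.I * s)) = -Complex.sinh (B * z) := by
      rw [mul_add, hBs, Complex.sinh_add, Complex.sinh_mul_I, Complex.cosh_mul_I,
        Complex.sin_pi, Complex.cos_pi]
      ring
    have e4 : Complex.sinh (B * (z - Complex.I * s)) = -Complex.sinh (B * z) := by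
      rw [mul_sub, hBs, Complex.sinh_sub, Complex.sinh_mul_I, Complex.cosh_mul_I,
        Complex.sin_pi, Complex.cos_pi]
      ring
    rw [hφ, hφ, hφ, e1, e2, e3, e4]
    have hcast : ((2 * Real.cos γ : ℝ) : ℂ) = 2 * Complex.cos γ := by
      push_cast [Complex.ofReal_cos]; ring
    rw [hcast]
    have hGz' : Complex.sinh (z * B) ≠ 0 := by rwa [mul_comm]
    field_simp [hGz']
    ring
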